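/- Let g, h : ℝ³ → ℝ be differentiable, and suppose there is r ≠ 0 with ‖∇g(x)‖ = r for all x with g(x) = 0, where h(u) = ‖u‖² − 1. Define Γ(x,u) = ⟨∇g(x), u + v(x)⟩ for a map v : ℝ³ → ℝ³. If |⟨∇g(x), v(x)⟩| < r for all x with g(x) = 0, then for every x, u with g(x) = 0, h(u) = 0 and Γ(x,u) = 0, the vectors ∂Γ/∂u (x,u) = ∇g(x) and ∇h(u) = 2u are linearly independent. -/
import Mathlib


open InnerProductSpace

/-- Regularity of the state constraint: under the regularity assumption
`|⟨∇g x, v x⟩| < r` on the zero level set of `g`, the vectors `∇g x` and `2 • u`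
are linearly independent whenever `g x = 0`, `h u = 0` and `Γ(x,u) = 0`. -/
theorem stmt_0 (v : EuclideanSpace ℝ (Fin 3) → EuclideanSpace ℝ (Fin 3))
    (g : EuclideanSpace ℝ (Fin 3) → ℝ) (hg : Differentiable ℝ g)
    (h : EuclideanSpace ℝ (Fin 3) → ℝ) (hh : ∀ u, h u = ‖u‖ ^ 2 - 1)
    (r : ℝ) (hr : r ≠ 0)
    (hgrad : ∀ x, g x = 0 → ‖gradient g x‖ = r)
    (hreg : ∀ x, g x = 0 → |(⟪gradient g x, v x⟫_ℝ)| < r) :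
    ∀ x u : EuclideanSpace ℝ (Fin 3), g x = 0 → h u = 0 →
      ⟪gradient g x, u + v x⟫_ℝ = 0 →
      LinearIndependent ℝ ![gradient g x, (2 : ℝ) • u] := by
  intro x u hgx hhu hΓ
  set w := gradient g x with hw
  have hrpos : 0 < r := by
    rcases lt_or_gt_of_ne hr with h' | h'
    · exfalso; have := hgrad x hgx; nlinarith [norm_nonneg w]
    · exact h'
  have hnw : ‖w‖ = r := hgrad x hgx
  have hnu : ‖u‖ = 1 := by
    have := hh u; rw [hhu] at this
    nlinarith [norm_nonneg u]
  -- c = ⟪w, u⟫ satisfies |c| < r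
  set c : ℝ := ⟪w, u⟫_ℝ with hc
  have habs : |c| < r := by
    have h1 : c = -⟪w, v x⟫_ℝ := by
      have := hΓ
      rw [inner_add_right] at this
      linarith
    rw [h1, abs_neg]
    exact hreg x hgx
  rw [LinearIndependent.pair_iff]
  intro s t hst
  have h1 : ⟪s • w + t • ((2:ℝ) • u), w⟫_ℝ = 0 := by rw [hst, inner_zero_left]
  have h2 : ⟪s • w + t • ((2:ℝ) • u), u⟫_ℝ = 0 := by rw [hst, inner_zero_left]
  rw [inner_add_left, inner_smul_left, inner_smul_left, inner_smul_left,
    real_inner_self_eq_norm_sq, real_inner_comm w u] at h1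
  rw [inner_add_left, inner_smul_left, inner_smul_left, inner_smul_left,
    real_inner_self_eq_norm_sq] at h2
  simp only [starRingEnd_apply, star_trivial, ← hc] at h1 h2
  have hc2 : c ^ 2 < r ^ 2 := by nlinarith [abs_nonneg c, sq_abs c]
  rw [hnw] at h1
  rw [hnu] at h2
  have key : s * (r ^ 2 - c ^ 2) = 0 := by linear_combination h1 - c * h2
  have hs : s = 0 := by
    rcases mul_eq_zero.mp key with h' | h'
    · exact h'
    · exfalso; nlinarith
  refine ⟨hs, ?_⟩
  rw [hs] at h2
  nlinarith [h2]
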